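/- arXiv:2302.00199 — 4 statements merged into one kernel-verified Lean document; each statement's English description precedes it below -/
import Mathlib

section
/- Every finite simple graph can be decomposed into K₁ and K₂ over the field F₂ = ZMod 2; that is, for every finite simple graph X there exist nonnegative integers n₁ and n₂ and an invertible matrix P over F₂ such that Pᵀ · A(X) · P equals the block-diagonal direct sum of n₁ copies of the 1×1 zero matrix and n₂ copies of the adjacency matrix of K₂, where A(X) is the adjacency matrix of X with entries read in F₂. -/
open Matrix

/-- Congruence ("similarity" in the paper) of square matrices over possibly different
(finite) index types: `N = Pᵀ * M * P` for some invertible `P`. -/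
def MatCongruent {k : Type*} [CommRing k] {m n : Type*} [Fintype m] [Fintype n]
    [DecidableEq m] [DecidableEq n] (M : Matrix m m k) (N : Matrix n n k) : Prop :=
  ∃ (P : Matrix m n k) (Q : Matrix n m k), P * Q = 1 ∧ Q * P = 1 ∧ N = Pᵀ * M * P

/-- `c` diagonal copies of a square matrix `A`. -/
def copies {k : Type*} [Zero k] {m : Type*} (c : ℕ) (A : Matrix m m k) :
    Matrix (m × Fin c) (m × Fin c) k :=
  Matrix.blockDiagonal fun _ => A

/-- Block-diagonal direct sum of two square matrices. -/
def dsum {k : Type*} [Zero k] {m n : Type*} (A : Matrix m m k) (B : Matrix n n k) :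
    Matrix (m ⊕ n) (m ⊕ n) k :=
  Matrix.fromBlocks A 0 0 B

/-- Adjacency matrix of the complete graph `Kₙ` (for `n = 1` this is the `1 × 1`
zero matrix, the adjacency matrix of `K₁`). -/
def Kmat (k : Type*) [Zero k] [One k] (n : ℕ) : Matrix (Fin n) (Fin n) k :=
  (⊤ : SimpleGraph (Fin n)).adjMatrix k

section Toolkit

variable {k : Type*} [CommRing k]

lemma congr_refl {m : Type*} [Fintype m] [DecidableEq m] (A : Matrix m m k) :
    MatCongruent A A :=
  ⟨1, 1, by simp, by simp, by simp⟩

lemma congr_symm {m n : Type*} [Fintype m] [Fintype n] [DecidableEq m] [DecidableEq n]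
    {A : Matrix m m k} {B : Matrix n n k} (h : MatCongruent A B) : MatCongruent B A := by
  obtain ⟨P, Q, hPQ, hQP, hB⟩ := h
  refine ⟨Q, P, hQP, hPQ, ?_⟩
  rw [hB]
  have : Qᵀ * (Pᵀ * A * P) * Q = (P * Q)ᵀ * A * (P * Q) := by
    rw [Matrix.transpose_mul]
    simp only [Matrix.mul_assoc]
  rw [this, hPQ]; simp

lemma congr_trans {m n p : Type*} [Fintype m] [Fintype n] [Fintype p]
    [DecidableEq m] [DecidableEq n] [DecidableEq p]
    {A : Matrix m m k} {B : Matrix n n k} {C : Matrix p p k}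
    (h₁ : MatCongruent A B) (h₂ : MatCongruent B C) : MatCongruent A C := by
  obtain ⟨P₁, Q₁, h11, h12, hB⟩ := h₁
  obtain ⟨P₂, Q₂, h21, h22, hC⟩ := h₂
  refine ⟨P₁ * P₂, Q₂ * Q₁, ?_, ?_, ?_⟩
  · have : P₁ * P₂ * (Q₂ * Q₁) = P₁ * ((P₂ * Q₂) * Q₁) := by simp only [Matrix.mul_assoc]
    rw [this, h21]; simpa using h11
  · have : Q₂ * Q₁ * (P₁ * P₂) = Q₂ * ((Q₁ * P₁) * P₂) := by simp only [Matrix.mul_assoc]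
    rw [this, h12]; simpa using h22
  · rw [hC, hB, Matrix.transpose_mul]; simp only [Matrix.mul_assoc]

lemma congr_reindex {m n : Type*} [Fintype m] [Fintype n] [DecidableEq m] [DecidableEq n]
    (e : n ≃ m) (A : Matrix m m k) : MatCongruent A (A.submatrix e e) := by
  refine ⟨(1 : Matrix m m k).submatrix id ⇑e, (1 : Matrix m m k).submatrix ⇑e id, ?_, ?_, ?_⟩
  · rw [Matrix.submatrix_mul_equiv (1 : Matrix m m k) (1 : Matrix m m k) id e id]
    simp
  · rw [show ((1 : Matrix m m k).submatrix ⇑e id : Matrix n m k) * (1 : Matrix m m k).submatrix id ⇑e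
      = ((1 : Matrix m m k) * (1 : Matrix m m k)).submatrix ⇑e ⇑e from
      Matrix.submatrix_mul_equiv (1 : Matrix m m k) (1 : Matrix m m k) ⇑e (Equiv.refl m) ⇑e]
    simp [Matrix.submatrix_one_equiv]
  · have h1 : ((1 : Matrix m m k).submatrix id ⇑e)ᵀ = (1 : Matrix m m k).submatrix ⇑e id := by
      rw [Matrix.transpose_submatrix, Matrix.transpose_one]
    rw [h1]
    have h2 : ((1 : Matrix m m k).submatrix ⇑e id) * A
        = ((1 : Matrix m m k) * A).submatrix ⇑e id := by
      have := Matrix.submatrix_mul_equiv (1 : Matrix m m k) A ⇑e (Equiv.refl m) id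
      simpa using this
    rw [h2, Matrix.one_mul]
    have h3 : (A.submatrix ⇑e id) * ((1 : Matrix m m k).submatrix id ⇑e)
        = (A * 1).submatrix ⇑e ⇑e := by
      have := Matrix.submatrix_mul_equiv A (1 : Matrix m m k) ⇑e (Equiv.refl m) ⇑e
      simpa using this
    rw [h3, Matrix.mul_one]

lemma congr_dsum {m m' n n' : Type*} [Fintype m] [Fintype m'] [Fintype n] [Fintype n']
    [DecidableEq m] [DecidableEq m'] [DecidableEq n] [DecidableEq n']
    {A : Matrix m m k} {A' : Matrix m' m' k} {B : Matrix n n k} {B' : Matrix n' n' k}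
    (hA : MatCongruent A A') (hB : MatCongruent B B') : MatCongruent (dsum A B) (dsum A' B') := by
  obtain ⟨P₁, Q₁, h11, h12, hA'⟩ := hA
  obtain ⟨P₂, Q₂, h21, h22, hB'⟩ := hB
  refine ⟨Matrix.fromBlocks P₁ 0 0 P₂, Matrix.fromBlocks Q₁ 0 0 Q₂, ?_, ?_, ?_⟩
  · simp [Matrix.fromBlocks_multiply, h11, h21, Matrix.fromBlocks_one]
  · simp [Matrix.fromBlocks_multiply, h12, h22, Matrix.fromBlocks_one]
  · rw [hA', hB']
    simp [dsum, Matrix.fromBlocks_transpose, Matrix.fromBlocks_multiply]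

lemma congr_dsum_comm {m n : Type*} [Fintype m] [Fintype n] [DecidableEq m] [DecidableEq n]
    (A : Matrix m m k) (B : Matrix n n k) : MatCongruent (dsum A B) (dsum B A) := by
  have h := congr_reindex (Equiv.sumComm n m) (dsum A B)
  have he : (dsum A B).submatrix (Equiv.sumComm n m) (Equiv.sumComm n m) = dsum B A := by
    ext i j
    rcases i with i | i <;> rcases j with j | j <;>
      simp [dsum, Matrix.submatrix_apply, Equiv.sumComm_apply]
  rwa [he] at h

lemma congr_dsum_assoc {m n p : Type*} [Fintype m] [Fintype n] [Fintype p]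
    [DecidableEq m] [DecidableEq n] [DecidableEq p]
    (A : Matrix m m k) (B : Matrix n n k) (C : Matrix p p k) :
    MatCongruent (dsum A (dsum B C)) (dsum (dsum A B) C) := by
  have h := congr_reindex (Equiv.sumAssoc m n p) (dsum A (dsum B C))
  have he : (dsum A (dsum B C)).submatrix (Equiv.sumAssoc m n p) (Equiv.sumAssoc m n p)
      = dsum (dsum A B) C := by
    ext i j
    rcases i with (i | i) | i <;> rcases j with (j | j) | j <;>
      simp [dsum, Matrix.submatrix_apply, Equiv.sumAssoc_apply_inl_inl,
        Equiv.sumAssoc_apply_inl_inr, Equiv.sumAssoc_apply_inr]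
  rwa [he] at h

/-- The reindexing bijection showing `A ⊕ (c copies of A)` is `c + 1` copies of `A`. -/
def shiftEquiv (m : Type*) (c : ℕ) : m × Fin (c + 1) ≃ m ⊕ m × Fin c where
  toFun := fun x => if h : x.2 = 0 then Sum.inl x.1 else Sum.inr (x.1, x.2.pred h)
  invFun := fun s => match s with
    | .inl x => (x, 0)
    | .inr (x, j) => (x, j.succ)
  left_inv := by
    rintro ⟨x, j⟩
    by_cases h : j = 0
    · simp [h]
    · simp [h]
  right_inv := by
    rintro (x | ⟨x, j⟩)
    · simp
    · simp [Fin.succ_ne_zero]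

lemma congr_copies_succ {m : Type*} [Fintype m] [DecidableEq m] (c : ℕ) (A : Matrix m m k) :
    MatCongruent (dsum A (copies c A)) (copies (c + 1) A) := by
  have h := congr_reindex (shiftEquiv m c) (dsum A (copies c A))
  have he : (dsum A (copies c A)).submatrix (shiftEquiv m c) (shiftEquiv m c)
      = copies (c + 1) A := by
    ext ⟨x, i⟩ ⟨y, j⟩
    simp only [Matrix.submatrix_apply, shiftEquiv, Equiv.coe_fn_mk, copies,
      Matrix.blockDiagonal_apply]
    by_cases hi : i = 0 <;> by_cases hj : j = 0
    · rw [dif_pos hi, dif_pos hj]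
      subst hi; subst hj
      simp [dsum]
    · rw [dif_pos hi, dif_neg hj, if_neg (by rintro rfl; exact hj hi)]
      simp [dsum]
    · rw [dif_neg hi, dif_pos hj, if_neg (by rintro rfl; exact hi hj)]
      simp [dsum]
    · rw [dif_neg hi, dif_neg hj]
      simp only [dsum, Matrix.fromBlocks_apply₂₂, Matrix.blockDiagonal_apply]
      by_cases hij : i = j
      · subst hij; simp
      · rw [if_neg hij, if_neg (fun h => hij (by rwa [Fin.pred_inj] at h))]
  rwa [he] at h

end Toolkit

section F2

lemma mat_add_self {α β : Type*} (M : Matrix α β (ZMod 2)) : M + M = 0 := by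
  ext i j
  have : ∀ a : ZMod 2, a + a = 0 := by decide
  exact this (M i j)

lemma Kmat_mul_self : Kmat (ZMod 2) 2 * Kmat (ZMod 2) 2 = 1 := by decide
lemma Kmat_transpose : (Kmat (ZMod 2) 2)ᵀ = Kmat (ZMod 2) 2 := by decide

/-- The elimination step: a symmetric, zero-diagonal matrix over `𝔽₂` whose `(inl 0, inl 1)`
entry is `1` is congruent to `K₂ ⊕ B` with `B` symmetric and zero-diagonal. -/
lemma elim_step {s : Type*} [Fintype s] [DecidableEq s]
    (A : Matrix (Fin 2 ⊕ s) (Fin 2 ⊕ s) (ZMod 2))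
    (hsym : Aᵀ = A) (hdiag : ∀ x, A x x = 0) (h01 : A (Sum.inl 0) (Sum.inl 1) = 1) :
    ∃ B : Matrix s s (ZMod 2), Bᵀ = B ∧ (∀ x, B x x = 0) ∧
      MatCongruent A (dsum (Kmat (ZMod 2) 2) B) := by
  have hs : ∀ u v, A u v = A v u := fun u v => by conv_lhs => rw [← hsym, Matrix.transpose_apply]
  set S := Kmat (ZMod 2) 2 with hSdef
  set A₁₂ := A.toBlocks₁₂ with hA12
  set A₂₁ := A.toBlocks₂₁ with hA21
  set A₂₂ := A.toBlocks₂₂ with hA22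
  have h11S : A.toBlocks₁₁ = S := by
    ext a b
    fin_cases a <;> fin_cases b
    · show A (Sum.inl 0) (Sum.inl 0) = S 0 0
      rw [hdiag, hSdef]; decide
    · show A (Sum.inl 0) (Sum.inl 1) = S 0 1
      rw [h01, hSdef]; decide
    · show A (Sum.inl 1) (Sum.inl 0) = S 1 0
      rw [hs, h01, hSdef]; decide
    · show A (Sum.inl 1) (Sum.inl 1) = S 1 1
      rw [hdiag, hSdef]; decide
  have hA : A = Matrix.fromBlocks S A₁₂ A₂₁ A₂₂ := by
    rw [← h11S, hA12, hA21, hA22, Matrix.fromBlocks_toBlocks]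
  have h21 : A₂₁ = A₁₂ᵀ := by
    ext x a; exact hs (Sum.inr x) (Sum.inl a)
  have h22sym : A₂₂ᵀ = A₂₂ := by
    ext x y; exact hs (Sum.inr y) (Sum.inr x)
  have h22diag : ∀ x, A₂₂ x x = 0 := fun x => hdiag (Sum.inr x)
  have hSS : S * S = 1 := Kmat_mul_self
  have hST : Sᵀ = S := Kmat_transpose
  set C := S * A₁₂ with hC
  set P : Matrix (Fin 2 ⊕ s) (Fin 2 ⊕ s) (ZMod 2) := Matrix.fromBlocks 1 C 0 1 with hP
  have hPP : P * P = 1 := by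
    rw [hP]
    rw [Matrix.fromBlocks_multiply]
    simp [mat_add_self, Matrix.fromBlocks_one]
  refine ⟨A₂₂ + A₂₁ * C, ?_, ?_, P, P, hPP, hPP, ?_⟩
  · rw [Matrix.transpose_add, h22sym, Matrix.transpose_mul, hC, Matrix.transpose_mul,
      hST, h21, Matrix.transpose_transpose, Matrix.mul_assoc]
  · intro x
    rw [Matrix.add_apply, h22diag, zero_add, hC, ← Matrix.mul_assoc]
    rw [Matrix.mul_apply]
    rw [Fin.sum_univ_two]
    have e1 : (A₂₁ * S) x 0 = A₂₁ x 1 := by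
      rw [Matrix.mul_apply, Fin.sum_univ_two]
      have s00 : S 0 0 = 0 := by decide
      have s10 : S 1 0 = 1 := by decide
      rw [s00, s10]; ring
    have e2 : (A₂₁ * S) x 1 = A₂₁ x 0 := by
      rw [Matrix.mul_apply, Fin.sum_univ_two]
      have s01 : S 0 1 = 1 := by decide
      have s11 : S 1 1 = 0 := by decide
      rw [s01, s11]; ring
    have e3 : ∀ a, A₁₂ a x = A₂₁ x a := fun a => (hs (Sum.inl a) (Sum.inr x))
    rw [e1, e2, e3 0, e3 1]
    have : ∀ a b : ZMod 2, a * b + b * a = 0 := by decide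
    exact this _ _
  · have hb12 : S * C + A₁₂ = 0 := by
      rw [hC, ← Matrix.mul_assoc, hSS, Matrix.one_mul]; exact mat_add_self _
    have hCTS : Cᵀ * S = A₂₁ := by
      rw [hC, Matrix.transpose_mul, hST, Matrix.mul_assoc, hSS, Matrix.mul_one, h21]
    have hb21 : Cᵀ * S + A₂₁ = 0 := by
      rw [hCTS]; exact mat_add_self _
    have hb22 : Cᵀ * A₁₂ = A₂₁ * C := by
      rw [hC, Matrix.transpose_mul, hST, h21, Matrix.mul_assoc]
    rw [hA, hP, Matrix.fromBlocks_transpose, Matrix.fromBlocks_multiply,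
      Matrix.fromBlocks_multiply, dsum, Matrix.fromBlocks_inj]
    refine ⟨?_, ?_, ?_, ?_⟩ <;>
      simp [hb12, hb21, hb22, add_comm]

/-- The target matrix with no `K₂` blocks is the zero matrix. -/
lemma target_zero (c : ℕ) :
    dsum (copies c (0 : Matrix (Fin 1) (Fin 1) (ZMod 2))) (copies 0 (Kmat (ZMod 2) 2)) = 0 := by
  ext i j
  rcases i with i | ⟨_, i2⟩
  · rcases j with j | ⟨_, j2⟩
    · simp [dsum, copies, Matrix.blockDiagonal_apply]
    · exact j2.elim0
  · exact i2.elim0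

/-- Moving two chosen distinct elements of `m` to the front. -/
def pickEquiv {m : Type*} [DecidableEq m] (i j : m) (hne : i ≠ j) :
    (Fin 2 ⊕ {x : m // x ≠ i ∧ x ≠ j}) ≃ m where
  toFun := Sum.elim (![i, j]) Subtype.val
  invFun := fun x =>
    if h1 : x = i then Sum.inl 0
    else if h2 : x = j then Sum.inl 1 else Sum.inr ⟨x, h1, h2⟩
  left_inv := by
    rintro (a | ⟨x, hx1, hx2⟩)
    · fin_cases a
      · simp
      · simp [Ne.symm hne]
    · simp [hx1, hx2]
  right_inv := by
    intro x
    by_cases hx1 : x = i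
    · subst hx1; simp
    · by_cases hx2 : x = j
      · subst hx2
        simp [Ne.symm hne, dif_neg hx1]
      · simp [dif_neg hx1, dif_neg hx2]

lemma main_induction : ∀ (N : ℕ) (m : Type) [Fintype m] [DecidableEq m]
    (A : Matrix m m (ZMod 2)), Fintype.card m = N → Aᵀ = A → (∀ x, A x x = 0) →
    ∃ n₁ n₂ : ℕ,
      MatCongruent A
        (dsum (copies n₁ (0 : Matrix (Fin 1) (Fin 1) (ZMod 2)))
          (copies n₂ (Kmat (ZMod 2) 2))) := by
  intro N
  induction N using Nat.strong_induction_on with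
  | _ N IH =>
    intro m _ _ A hcard hsym hdiag
    by_cases hA0 : A = 0
    · refine ⟨Fintype.card m, 0, ?_⟩
      have hcards : Fintype.card ((Fin 1 × Fin (Fintype.card m)) ⊕ (Fin 2 × Fin 0))
          = Fintype.card m := by
        rw [Fintype.card_sum, Fintype.card_prod, Fintype.card_prod, Fintype.card_fin,
          Fintype.card_fin, Fintype.card_fin, Fintype.card_fin]
        omega
      have e := Fintype.equivOfCardEq hcards
      have h := congr_reindex e A
      rw [target_zero, hA0]
      rw [hA0] at h
      simpa using h
    · -- find a nonzero entry
      have hex : ∃ i j, A i j ≠ 0 := by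
        by_contra h
        push_neg at h
        exact hA0 (by ext i j; exact h i j)
      obtain ⟨i, j, hij⟩ := hex
      have h1 : A i j = 1 := by
        have : ∀ a : ZMod 2, a ≠ 0 → a = 1 := by decide
        exact this _ hij
      have hne : i ≠ j := by
        rintro rfl
        rw [hdiag i] at h1
        exact absurd h1 (by decide)
      -- the reindexing equivalence
      set s := {x : m // x ≠ i ∧ x ≠ j} with hsdef
      let e : (Fin 2 ⊕ s) ≃ m := pickEquiv i j hne
      have he0 : e (Sum.inl 0) = i := rfl
      have he1 : e (Sum.inl 1) = j := rfl
      set A' := A.submatrix e e with hA'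
      have hsm : ∀ u v, A u v = A v u := fun u v => congrFun (congrFun hsym v) u
      have hA'sym : A'ᵀ = A' := by
        ext u v
        rw [hA', Matrix.transpose_apply, Matrix.submatrix_apply, Matrix.submatrix_apply]
        exact hsm (e v) (e u)
      have hA'diag : ∀ x, A' x x = 0 := fun x => hdiag (e x)
      have hA'01 : A' (Sum.inl 0) (Sum.inl 1) = 1 := by
        rw [hA', Matrix.submatrix_apply, he0, he1]
        exact h1
      obtain ⟨B, hBsym, hBdiag, hcong⟩ := elim_step A' hA'sym hA'diag hA'01
      -- cardinality bookkeeping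
      have hcs : 2 + Fintype.card s = N := by
        rw [← hcard, ← Fintype.card_congr e]
        simp
      obtain ⟨n₁, n₂, hB⟩ := IH (Fintype.card s) (by omega) s B rfl hBsym hBdiag
      refine ⟨n₁, n₂ + 1, ?_⟩
      set Zc := copies n₁ (0 : Matrix (Fin 1) (Fin 1) (ZMod 2)) with hZc
      set K2c := copies n₂ (Kmat (ZMod 2) 2) with hK2c
      have c1 : MatCongruent A (dsum (Kmat (ZMod 2) 2) B) :=
        congr_trans (congr_reindex e A) hcong
      have c2 : MatCongruent (dsum (Kmat (ZMod 2) 2) B)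
          (dsum (Kmat (ZMod 2) 2) (dsum Zc K2c)) :=
        congr_dsum (congr_refl _) hB
      have c3 := congr_dsum_assoc (Kmat (ZMod 2) 2) Zc K2c
      have c4 := congr_dsum (congr_dsum_comm (Kmat (ZMod 2) 2) Zc) (congr_refl K2c)
      have c5 := congr_symm (congr_dsum_assoc Zc (Kmat (ZMod 2) 2) K2c)
      have c6 := congr_dsum (congr_refl Zc) (congr_copies_succ n₂ (Kmat (ZMod 2) 2))
      exact congr_trans c1 (congr_trans c2 (congr_trans c3 (congr_trans c4
        (congr_trans c5 c6))))

end F2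

/-- Every finite simple graph can be decomposed into `K₁` and `K₂` over `𝔽₂`. -/
theorem decomposition_over_F2 (n : ℕ) (G : SimpleGraph (Fin n)) [DecidableRel G.Adj] :
    ∃ n₁ n₂ : ℕ,
      MatCongruent (G.adjMatrix (ZMod 2))
        (dsum (copies n₁ (0 : Matrix (Fin 1) (Fin 1) (ZMod 2)))
          (copies n₂ (Kmat (ZMod 2) 2))) := by
  exact main_induction (Fintype.card (Fin n)) (Fin n) (G.adjMatrix (ZMod 2)) rfl
    (SimpleGraph.transpose_adjMatrix G)
    (fun x => by simp)
end

section
/- The set of nonzero values of the determinant (over ℤ) of the adjacency matrix of a finite simple graph on 4 vertices equals {−3, 1}. -/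
/-- `𝒢 n` is the set of nonzero integers arising as the determinant of the adjacency
matrix of a simple graph on `n` vertices. -/
def detSet (n : ℕ) : Set ℤ :=
  {d : ℤ | d ≠ 0 ∧ ∃ (G : SimpleGraph (Fin n)) (inst : DecidableRel G.Adj),
    (@SimpleGraph.adjMatrix ℤ (Fin n) G inst _ _).det = d}

section Aux

set_option maxHeartbeats 1000000 in
private lemma detB (a b c d e f : ℤ) (ha : a = 0 ∨ a = 1) (hb : b = 0 ∨ b = 1)
    (hc : c = 0 ∨ c = 1) (hd : d = 0 ∨ d = 1) (he : e = 0 ∨ e = 1)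
    (hf : f = 0 ∨ f = 1) :
    Matrix.det !![0,a,b,c; a,0,d,e; b,d,0,f; c,e,f,0] = -3 ∨
    Matrix.det !![0,a,b,c; a,0,d,e; b,d,0,f; c,e,f,0] = 0 ∨
    Matrix.det !![0,a,b,c; a,0,d,e; b,d,0,f; c,e,f,0] = 1 := by
  rcases ha with rfl | rfl <;> rcases hb with rfl | rfl <;> rcases hc with rfl | rfl <;>
    rcases hd with rfl | rfl <;> rcases he with rfl | rfl <;> rcases hf with rfl | rfl <;>
    decide

private lemma adjMat_eq (G : SimpleGraph (Fin 4)) (inst : DecidableRel G.Adj) :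
    (@SimpleGraph.adjMatrix ℤ (Fin 4) G inst _ _) =
      !![0, (if G.Adj 0 1 then 1 else 0), (if G.Adj 0 2 then 1 else 0), (if G.Adj 0 3 then 1 else 0);
         (if G.Adj 0 1 then 1 else 0), 0, (if G.Adj 1 2 then 1 else 0), (if G.Adj 1 3 then 1 else 0);
         (if G.Adj 0 2 then 1 else 0), (if G.Adj 1 2 then 1 else 0), 0, (if G.Adj 2 3 then 1 else 0);
         (if G.Adj 0 3 then 1 else 0), (if G.Adj 1 3 then 1 else 0), (if G.Adj 2 3 then 1 else 0), 0] := by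
  ext i j
  fin_cases i <;> fin_cases j <;>
    simp [SimpleGraph.adjMatrix_apply, G.irrefl] <;>
    exact if_congr (G.adj_comm _ _) rfl rfl

private lemma ite01 (p : Prop) [Decidable p] :
    (if p then (1:ℤ) else 0) = 0 ∨ (if p then (1:ℤ) else 0) = 1 := by
  split <;> simp

/-- The perfect matching on 4 vertices.  -/
private def GM : SimpleGraph (Fin 4) := SimpleGraph.fromRel fun i j => i = 0 ∧ j = 1 ∨ i = 2 ∧ j = 3

private instance : DecidableRel GM.Adj := fun i j =>
  decidable_of_iff _ (SimpleGraph.fromRel_adj _ i j).symm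

end Aux

/-- `𝒢₄ = {-3, 1}`. -/
theorem detSet_four : detSet 4 = {-3, 1} := by
  ext x
  simp only [detSet, Set.mem_setOf_eq, Set.mem_insert_iff, Set.mem_singleton_iff]
  constructor
  · rintro ⟨hx, G, inst, rfl⟩
    rw [adjMat_eq G inst]
    rw [adjMat_eq G inst] at hx
    rcases detB _ _ _ _ _ _ (ite01 (G.Adj 0 1)) (ite01 (G.Adj 0 2)) (ite01 (G.Adj 0 3))
        (ite01 (G.Adj 1 2)) (ite01 (G.Adj 1 3)) (ite01 (G.Adj 2 3)) with h | h | h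
    · exact Or.inl h
    · exact absurd h hx
    · exact Or.inr h
  · rintro (rfl | rfl)
    · exact ⟨by norm_num, ⊤, inferInstance, by decide⟩
    · exact ⟨one_ne_zero, GM, inferInstance, by decide⟩
end

section
/- Let k be a field and let X be a finite simple graph on n ≥ 1 vertices whose adjacency matrix A(X), with entries read in k, has determinant 0 over k. Then there exists a vertex v of X and an invertible n×n matrix P over k such that Pᵀ · A(X) · P equals the block-diagonal direct sum of the 1×1 zero matrix and the adjacency matrix (with entries in k) of the induced subgraph X ∖ v obtained by deleting the vertex v. -/
open Matrix

/-- Congruence ("similarity" in the paper) of square matrices over possibly different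
(finite) index types: `N = Pᵀ * M * P` for some invertible `P`. -/
def CongruentMat {k : Type*} [CommRing k] {m n : Type*} [Fintype m] [Fintype n]
    [DecidableEq m] [DecidableEq n] (M : Matrix m m k) (N : Matrix n n k) : Prop :=
  ∃ (P : Matrix m n k) (Q : Matrix n m k), P * Q = 1 ∧ Q * P = 1 ∧ N = Pᵀ * M * P

instance induceDecidableRel {n : ℕ} (G : SimpleGraph (Fin n)) [inst : DecidableRel G.Adj]
    (v : Fin n) : DecidableRel ((G.induce {u | u ≠ v}).Adj) :=
  fun a b => inst a.1 b.1

/-- If the adjacency matrix of a graph `X` on `n ≥ 1` vertices has determinant `0` over a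
field `k`, then there is a vertex `v` with `X ∼ K₁ ⊕ (X \ v)` over `k`. -/
theorem deleteVertex_of_det_eq_zero (k : Type*) [Field k] (n : ℕ) (hn : 1 ≤ n)
    (G : SimpleGraph (Fin n)) [DecidableRel G.Adj]
    (hdet : (G.adjMatrix k).det = 0) :
    ∃ v : Fin n,
      CongruentMat (G.adjMatrix k)
        (dsum (0 : Matrix (Fin 1) (Fin 1) k)
          ((G.induce {u | u ≠ v}).adjMatrix k)) := by
  classical
  set A := G.adjMatrix k with hA
  obtain ⟨x, hx0, hx⟩ := Matrix.exists_mulVec_eq_zero_iff.2 hdet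
  obtain ⟨v, hv⟩ : ∃ v, x v ≠ 0 := by
    by_contra h
    push_neg at h
    exact hx0 (funext h)
  refine ⟨v, ?_⟩
  set y : Fin n → k := (x v)⁻¹ • x with hy
  have hyv : y v = 1 := by simp [hy, inv_mul_cancel₀ hv]
  have hAy : A *ᵥ y = 0 := by
    rw [hy, Matrix.mulVec_smul, hx, smul_zero]
  have hmul : ∀ i, ∑ j, A i j * y j = 0 := fun i => congrFun hAy i
  have hsymm : ∀ i j, A i j = A j i := by
    intro i j
    simp [hA, SimpleGraph.adjMatrix_apply, SimpleGraph.adj_comm]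
  have hmul' : ∀ j, ∑ i, y i * A i j = 0 := by
    intro j
    rw [← hmul j]
    exact Finset.sum_congr rfl fun i _ => by rw [hsymm i j, mul_comm]
  have herase : (Finset.univ.filter fun u : Fin n => u ≠ v) = Finset.univ.erase v := by
    ext u; simp [Finset.mem_erase, and_comm]
  set P : Matrix (Fin n) (Fin 1 ⊕ ↥{u : Fin n | u ≠ v}) k :=
    Matrix.of fun i c => Sum.elim (fun _ => y i)
      (fun u : ↥{u : Fin n | u ≠ v} => if i = ↑u then 1 else 0) c with hP
  set Q : Matrix (Fin 1 ⊕ ↥{u : Fin n | u ≠ v}) (Fin n) k :=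
    Matrix.of fun c j => Sum.elim (fun _ => if j = v then (1 : k) else 0)
      (fun u : ↥{u : Fin n | u ≠ v} =>
        (if j = ↑u then 1 else 0) - y ↑u * (if j = v then 1 else 0)) c with hQ
  have hAP1 : ∀ (i : Fin n) (d0 : Fin 1), (A * P) i (Sum.inl d0) = 0 := by
    intro i d0
    rw [Matrix.mul_apply]
    simpa only [hP, Matrix.of_apply, Sum.elim_inl] using hmul i
  have hAP2 : ∀ (i : Fin n) (w : ↥{u : Fin n | u ≠ v}),
      (A * P) i (Sum.inr w) = A i ↑w := by
    intro i w
    rw [Matrix.mul_apply]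
    simp only [hP, Matrix.of_apply, Sum.elim_inr, mul_ite, mul_one, mul_zero]
    simp [Finset.sum_ite_eq]
  refine ⟨P, Q, ?_, ?_, ?_⟩
  · ext i j
    rw [Matrix.mul_apply, Fintype.sum_sum_type, hP, hQ]
    simp only [Matrix.of_apply, Sum.elim_inl, Sum.elim_inr, Fin.sum_univ_one,
      mul_sub, Finset.sum_sub_distrib, ite_mul, mul_ite, one_mul, mul_one, zero_mul, mul_zero]
    rw [Finset.sum_set_coe (s := {u : Fin n | u ≠ v})
        (f := fun u => if j = u then if i = u then (1:k) else 0 else 0),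
      Finset.sum_set_coe (s := {u : Fin n | u ≠ v})
        (f := fun u => if j = v then if i = u then y u else 0 else 0),
      Set.toFinset_setOf, herase]
    by_cases hj : j = v <;> by_cases hij : i = j <;>
      simp_all [Finset.sum_ite_eq, Finset.mem_erase, Matrix.one_apply]
  · ext c d
    rw [Matrix.mul_apply]
    cases c with
    | inl c0 =>
      cases d with
      | inl d0 =>
        simp only [hP, hQ, Matrix.of_apply, Sum.elim_inl, ite_mul, one_mul, zero_mul]
        rw [Finset.sum_ite_eq' Finset.univ v y]
        simp [hyv, Matrix.one_apply, Subsingleton.elim c0 d0]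
      | inr u =>
        simp only [hP, hQ, Matrix.of_apply, Sum.elim_inl, Sum.elim_inr,
          ite_mul, one_mul, zero_mul]
        rw [Finset.sum_ite_eq' Finset.univ v fun j => if j = (↑u : Fin n) then (1:k) else 0]
        have hu := u.2
        simp only [Set.mem_setOf_eq] at hu
        simp [Matrix.one_apply, Ne.symm hu]
    | inr u =>
      have hu := u.2
      simp only [Set.mem_setOf_eq] at hu
      cases d with
      | inl d0 =>
        simp only [hP, hQ, Matrix.of_apply, Sum.elim_inl, Sum.elim_inr,
          sub_mul, ite_mul, one_mul, zero_mul, mul_ite, mul_one, mul_zero,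
          Finset.sum_sub_distrib]
        rw [Finset.sum_ite_eq' Finset.univ (↑u : Fin n) y,
          Finset.sum_ite_eq' Finset.univ v fun j => y ↑u * y j]
        simp [hyv, Matrix.one_apply]
      | inr w =>
        have hw := w.2
        simp only [Set.mem_setOf_eq] at hw
        simp only [hP, hQ, Matrix.of_apply, Sum.elim_inr,
          sub_mul, ite_mul, one_mul, zero_mul, mul_ite, mul_one, mul_zero,
          Finset.sum_sub_distrib]
        rw [Finset.sum_ite_eq' Finset.univ (↑w : Fin n)
            fun j => (if j = (↑u : Fin n) then (1:k) else 0) - if j = v then y ↑u else 0]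
        by_cases h : u = w
        · simp [h, Matrix.one_apply, hw]
        · have hcoe : (↑u : Fin n) ≠ ↑w := fun hc => h (Subtype.ext hc)
          simp [Matrix.one_apply, h, hcoe, Ne.symm hcoe, hw]
  · rw [Matrix.mul_assoc]
    ext c d
    rw [Matrix.mul_apply]
    simp only [Matrix.transpose_apply]
    cases d with
    | inl d0 =>
      simp only [hAP1, mul_zero, Finset.sum_const_zero]
      cases c <;> simp [dsum, Matrix.fromBlocks]
    | inr w =>
      simp only [hAP2]
      cases c with
      | inl c0 =>
        simp only [hP, Matrix.of_apply, Sum.elim_inl]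
        rw [hmul' (↑w : Fin n)]
        simp [dsum, Matrix.fromBlocks]
      | inr u =>
        simp only [hP, Matrix.of_apply, Sum.elim_inr, ite_mul, one_mul, zero_mul]
        rw [Finset.sum_ite_eq' Finset.univ (↑u : Fin n) fun i => A i ↑w]
        simp only [Finset.mem_univ, if_true]
        simp [dsum, Matrix.fromBlocks, hA, SimpleGraph.adjMatrix_apply,
          SimpleGraph.comap_adj]
end

section
/- Let p be a prime and let x be a nonzero element of ZMod p. Then the 2×2 identity matrix I₂ and the matrix x·I₂ are congruent over ZMod p; that is, there exists an invertible 2×2 matrix P over ZMod p such that Pᵀ · P = x·I₂. -/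
open Matrix

/-- For a prime `p` and any nonzero `x` in `ZMod p`, the identity matrix `I₂` is
congruent over `ZMod p` to `x • I₂`: there is an invertible `P` with `Pᵀ * P = x • I₂`. -/
theorem identity_congruent_smul (p : ℕ) (hp : p.Prime) (x : ZMod p) (hx : x ≠ 0) :
    ∃ P : Matrix (Fin 2) (Fin 2) (ZMod p),
      IsUnit P ∧ Pᵀ * (1 : Matrix (Fin 2) (Fin 2) (ZMod p)) * P =
        x • (1 : Matrix (Fin 2) (Fin 2) (ZMod p)) := by
  haveI : Fact p.Prime := ⟨hp⟩
  obtain ⟨a, b, hab⟩ := ZMod.sq_add_sq p x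
  refine ⟨!![a, b; -b, a], ?_, ?_⟩
  · rw [Matrix.isUnit_iff_isUnit_det]
    have hdet : (!![a, b; -b, a] : Matrix (Fin 2) (Fin 2) (ZMod p)).det = x := by
      simp [Matrix.det_fin_two]
      linear_combination hab
    rw [hdet]
    exact isUnit_iff_ne_zero.mpr hx
  · rw [Matrix.mul_one]
    have ht : (!![a, b; -b, a] : Matrix (Fin 2) (Fin 2) (ZMod p))ᵀ = !![a, -b; b, a] := by
      ext i j; fin_cases i <;> fin_cases j <;> rfl
    rw [ht, Matrix.mul_fin_two, ← hab]
    ext i j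
    fin_cases i <;> fin_cases j <;>
      simp [Matrix.smul_apply, Matrix.one_apply] <;> ring
end
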